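/- Let v ≥ 3 be an integer. Then d(2,v) ≤ v / log₂( v^v (v−2)^(v−2) / (v−1)^(2(v−1)) ). -/

import Mathlib

open Filter
open Finset


/-- term of binomial expansion -/
private def trm (n j i : ℕ) : ℕ := j ^ i * (n - j) ^ (n - i) * n.choose i

lemma trm_sum (n j : ℕ) (hj : j ≤ n) : ∑ i ∈ range (n+1), trm n j i = n ^ n := by
  have := add_pow j (n - j) n
  rw [Nat.add_sub_cancel' hj] at this
  simpa [trm] using this.symm

lemma trm_le_max (n j : ℕ) (hj : j ≤ n) : ∀ i, trm n j i ≤ trm n j j := by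
  -- step up : i < j → trm i ≤ trm (i+1)
  have up : ∀ i, i < j → trm n j i ≤ trm n j (i+1) := by
    intro i hi
    have hin : i < n := lt_of_lt_of_le hi hj
    have h1 : n - i = (n - (i+1)) + 1 := by omega
    have key : (n - j) * (i+1) ≤ j * (n - i) := by
      have : n - j ≤ n - i := by omega
      calc (n - j) * (i+1) ≤ (n - i) * j := Nat.mul_le_mul this hi
        _ = j * (n - i) := Nat.mul_comm _ _
    -- trm i = j^i (n-j)^(n-i) C(n,i); trm (i+1) = j^(i+1) (n-j)^(n-i-1) C(n,i+1)
    have hch : n.choose (i+1) * (i+1) = n.choose i * (n - i) := Nat.choose_succ_right_eq n i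
    -- multiply both sides by (i+1)
    have : trm n j i * (i+1) ≤ trm n j (i+1) * (i+1) := by
      unfold trm
      rw [h1, pow_succ, pow_succ]
      calc j ^ i * ((n - j) ^ (n - (i + 1)) * (n - j)) * n.choose i * (i + 1)
          = (j ^ i * (n - j) ^ (n - (i+1)) * n.choose i) * ((n - j) * (i+1)) := by ring
        _ ≤ (j ^ i * (n - j) ^ (n - (i+1)) * n.choose i) * (j * (n - i)) :=
            Nat.mul_le_mul_left _ key
        _ = (j ^ i * j) * (n - j) ^ (n - (i + 1)) * (n.choose i * (n - i)) := by ring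
        _ = (j ^ i * j) * (n - j) ^ (n - (i + 1)) * (n.choose (i+1) * (i+1)) := by rw [hch]
        _ = j ^ i * j * (n - j) ^ (n - (i + 1)) * n.choose (i + 1) * (i + 1) := by ring
    exact Nat.le_of_mul_le_mul_right this (Nat.succ_pos i)
  have down : ∀ i, j ≤ i → trm n j (i+1) ≤ trm n j i := by
    intro i hi
    by_cases hin : i < n
    · have h1 : n - i = (n - (i+1)) + 1 := by omega
      have key : j * (n - i) ≤ (n - j) * (i+1) := by
        have h2 : n - i ≤ n - j := by omega
        calc j * (n - i) ≤ (i+1) * (n - j) := Nat.mul_le_mul (by omega) h2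
          _ = (n - j) * (i+1) := Nat.mul_comm _ _
      have hch : n.choose (i+1) * (i+1) = n.choose i * (n - i) := Nat.choose_succ_right_eq n i
      have : trm n j (i+1) * (i+1) ≤ trm n j i * (i+1) := by
        unfold trm
        rw [h1, pow_succ, pow_succ]
        calc j ^ i * j * (n - j) ^ (n - (i + 1)) * n.choose (i + 1) * (i + 1)
            = (j ^ i * (n - j) ^ (n - (i+1))) * j * (n.choose (i+1) * (i+1)) := by ring
          _ = (j ^ i * (n - j) ^ (n - (i+1))) * j * (n.choose i * (n - i)) := by rw [hch]
          _ = (j ^ i * (n - j) ^ (n - (i+1)) * n.choose i) * (j * (n - i)) := by ring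
          _ ≤ (j ^ i * (n - j) ^ (n - (i+1)) * n.choose i) * ((n - j) * (i+1)) :=
              Nat.mul_le_mul_left _ key
          _ = j ^ i * ((n - j) ^ (n - (i + 1)) * (n - j)) * n.choose i * (i + 1) := by ring
      exact Nat.le_of_mul_le_mul_right this (Nat.succ_pos i)
    · have : n.choose (i+1) = 0 := Nat.choose_eq_zero_of_lt (by omega)
      simp [trm, this]
  have low : ∀ d, trm n j (j - d) ≤ trm n j j := by
    intro d
    induction d with
    | zero => simp
    | succ d ih =>
      rcases Nat.lt_or_ge d j with h | h
      · have he : j - (d+1) + 1 = j - d := by omega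
        have := up (j - (d+1)) (by omega)
        rw [he] at this
        exact this.trans ih
      · have : j - (d+1) = j - d := by omega
        rw [this]; exact ih
  have high : ∀ d, trm n j (j + d) ≤ trm n j j := by
    intro d
    induction d with
    | zero => simp
    | succ d ih =>
      have : j + (d+1) = (j + d) + 1 := by omega
      rw [this]
      exact (down (j + d) (by omega)).trans ih
  intro i
  rcases le_or_gt i j with h | h
  · have : i = j - (j - i) := by omega
    rw [this]; exact low _
  · have : i = j + (i - j) := by omega
    rw [this]; exact high _

lemma choose_entropy_ub (n j : ℕ) (hj : j ≤ n) :
    j ^ j * (n - j) ^ (n - j) * n.choose j ≤ n ^ n := by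
  rw [← trm_sum n j hj]
  exact Finset.single_le_sum (f := trm n j) (fun i _ => Nat.zero_le _) (Finset.mem_range.mpr (Nat.lt_succ_of_le hj))

lemma choose_entropy_lb (n j : ℕ) (hj : j ≤ n) :
    n ^ n ≤ (n + 1) * (j ^ j * (n - j) ^ (n - j) * n.choose j) := by
  rw [← trm_sum n j hj]
  calc ∑ i ∈ range (n+1), trm n j i ≤ ∑ _i ∈ range (n+1), trm n j j :=
        Finset.sum_le_sum (fun i _ => trm_le_max n j hj i)
    _ = (n+1) * trm n j j := by rw [Finset.sum_const, card_range, smul_eq_mul]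
    _ = (n+1) * (j ^ j * (n - j) ^ (n - j) * n.choose j) := by rw [trm]

/-- Key numeric bound: `C((v-1)m, m) * (v^v (v-2)^(v-2))^m ≤ (vm+1) * C(vm,m) * ((v-1)^(2(v-1)))^m` -/
lemma key_binom (v m : ℕ) (hv : 3 ≤ v) :
    ((v-1)*m).choose m * (v ^ v * (v-2) ^ (v-2)) ^ m
      ≤ (v*m+1) * ((v*m).choose m) * ((v-1) ^ (2*(v-1))) ^ m := by
  rcases Nat.eq_zero_or_pos m with rfl | hm
  · simp [Nat.mul_zero]
  have e1 : (v-1)*m - m = (v-2)*m := by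
    calc (v-1)*m - m = (v-1)*m - 1*m := by rw [one_mul]
      _ = ((v-1)-1)*m := (Nat.sub_mul _ _ _).symm
      _ = (v-2)*m := by congr 1
  have hmle : m ≤ (v-1)*m := Nat.le_mul_of_pos_left m (by omega)
  have h1 := choose_entropy_ub ((v-1)*m) m hmle
  rw [e1] at h1
  have hsplit : m ^ ((v-1)*m) = m ^ m * m ^ ((v-2)*m) := by
    rw [← pow_add]; congr 1
    have h3 : 3*m ≤ v*m := Nat.mul_le_mul_right m hv
    rw [Nat.sub_mul, Nat.sub_mul]; omega
  have h1' : ((v-1)*m).choose m * ((v-2) ^ ((v-2)*m)) ≤ (v-1) ^ ((v-1)*m) := by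
    have hmm : 0 < m ^ ((v-1)*m) := Nat.pow_pos hm
    have step : m ^ ((v-1)*m) * (((v-1)*m).choose m * ((v-2) ^ ((v-2)*m)))
        ≤ m ^ ((v-1)*m) * ((v-1) ^ ((v-1)*m)) := by
      calc m ^ ((v-1)*m) * (((v-1)*m).choose m * ((v-2) ^ ((v-2)*m)))
          = m ^ m * ((v-2)*m) ^ ((v-2)*m) * ((v-1)*m).choose m := by
            rw [mul_pow, hsplit]; ring
        _ ≤ ((v-1)*m) ^ ((v-1)*m) := h1
        _ = m ^ ((v-1)*m) * (v-1) ^ ((v-1)*m) := by rw [mul_comm (v-1) m, mul_pow]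
    exact Nat.le_of_mul_le_mul_left step hmm
  -- ineq 2 : v^(vm) ≤ (vm+1) * C(vm,m) * (v-1)^((v-1)m)
  have e2 : v*m - m = (v-1)*m := by
    calc v*m - m = v*m - 1*m := by rw [one_mul]
      _ = (v-1)*m := (Nat.sub_mul _ _ _).symm
  have hmle2 : m ≤ v*m := Nat.le_mul_of_pos_left m (by omega)
  have h2 := choose_entropy_lb (v*m) m hmle2
  rw [e2] at h2
  have hsplit2 : m ^ (v*m) = m ^ m * m ^ ((v-1)*m) := by
    rw [← pow_add]; congr 1
    have h3 : 3*m ≤ v*m := Nat.mul_le_mul_right m hv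
    rw [Nat.sub_mul]; omega
  have h2' : v ^ (v*m) ≤ (v*m+1) * ((v*m).choose m * (v-1) ^ ((v-1)*m)) := by
    have hmm : 0 < m ^ (v*m) := Nat.pow_pos hm
    have step : m ^ (v*m) * (v ^ (v*m))
        ≤ m ^ (v*m) * ((v*m+1) * ((v*m).choose m * (v-1) ^ ((v-1)*m))) := by
      calc m ^ (v*m) * (v ^ (v*m)) = (v*m) ^ (v*m) := by rw [mul_comm v m, mul_pow]
        _ ≤ (v*m+1) * (m ^ m * ((v-1)*m) ^ ((v-1)*m) * (v*m).choose m) := h2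
        _ = m ^ (v*m) * ((v*m+1) * ((v*m).choose m * (v-1) ^ ((v-1)*m))) := by
            rw [mul_pow, hsplit2]; ring
    exact Nat.le_of_mul_le_mul_left step hmm
  -- combine
  have comb : (((v-1)*m).choose m * ((v-2) ^ ((v-2)*m))) * (v ^ (v*m))
      ≤ ((v-1) ^ ((v-1)*m)) * ((v*m+1) * ((v*m).choose m * (v-1) ^ ((v-1)*m))) :=
    Nat.mul_le_mul h1' h2'
  calc ((v-1)*m).choose m * (v ^ v * (v-2) ^ (v-2)) ^ m
      = (((v-1)*m).choose m * ((v-2) ^ ((v-2)*m))) * (v ^ (v*m)) := by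
        rw [mul_pow, ← pow_mul, ← pow_mul, mul_comm v m, mul_comm (v-2) m]; ring
    _ ≤ ((v-1) ^ ((v-1)*m)) * ((v*m+1) * ((v*m).choose m * (v-1) ^ ((v-1)*m))) := comb
    _ = (v*m+1) * ((v*m).choose m) * ((v-1) ^ (2*(v-1))) ^ m := by
        rw [← pow_mul, show 2*(v-1)*m = (v-1)*m + (v-1)*m by ring, pow_add]; ring


lemma card_filter_equiv {α β : Type*} [Fintype α] [Fintype β] [DecidableEq β] (e : α ≃ β)
    (p : β → Prop) [DecidablePred p] :
    (Finset.univ.filter (fun a => p (e a))).card = (Finset.univ.filter p).card := by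
  apply Finset.card_bij (fun a _ => e a)
  · intro a ha; simp only [mem_filter, mem_univ, true_and] at ha ⊢; exact ha
  · intro a _ a' _ h; exact e.injective h
  · intro b hb
    refine ⟨e.symm b, ?_, by simp⟩
    simp only [mem_filter, mem_univ, true_and, Equiv.apply_symm_apply] at hb ⊢
    exact hb

lemma exists_perm_finset {α : Type*} [Fintype α] [DecidableEq α] (T T' : Finset α)
    (h : T.card = T'.card) :
    ∃ π : Equiv.Perm α, ∀ i, π i ∈ T' ↔ i ∈ T := by
  classical
  have h1 : Fintype.card ↥(↑T : Set α) = Fintype.card ↥(↑T' : Set α) := by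
    simpa using h
  have h2 : Fintype.card ↥(↑T : Set α)ᶜ = Fintype.card ↥(↑T' : Set α)ᶜ := by
    rw [Fintype.card_compl_set, Fintype.card_compl_set, h1]
  let e₁ := Fintype.equivOfCardEq h1
  let e₂ := Fintype.equivOfCardEq h2
  refine ⟨(Equiv.Set.sumCompl (↑T : Set α)).symm.trans
    ((e₁.sumCongr e₂).trans (Equiv.Set.sumCompl (↑T' : Set α))), fun i => ?_⟩
  by_cases hi : i ∈ (↑T : Set α)
  · have hs : (Equiv.Set.sumCompl (↑T : Set α)).symm i = Sum.inl ⟨i, hi⟩ :=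
      Equiv.Set.sumCompl_symm_apply_of_mem hi
    simp only [Equiv.trans_apply, hs, Equiv.sumCongr_apply, Sum.map_inl,
      Equiv.Set.sumCompl_apply_inl]
    have := (e₁ ⟨i, hi⟩).2
    simp only [Finset.mem_coe] at this hi
    simp [this, hi]
  · have hs : (Equiv.Set.sumCompl (↑T : Set α)).symm i = Sum.inr ⟨i, hi⟩ :=
      Equiv.Set.sumCompl_symm_apply_of_notMem hi
    simp only [Equiv.trans_apply, hs, Equiv.sumCongr_apply, Sum.map_inr,
      Equiv.Set.sumCompl_apply_inr]
    have := (e₂ ⟨i, hi⟩).2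
    simp only [Set.mem_compl_iff, Finset.mem_coe] at this hi
    simp [this, hi]

/-- the set of balanced columns: every symbol appears exactly `m` times -/
def Bal (v m : ℕ) : Finset (Fin (v*m) → Fin v) :=
  Finset.univ.filter (fun x => ∀ s : Fin v, (Finset.univ.filter (fun i => x i = s)).card = m)

lemma bal_nonempty (v m : ℕ) (hv : 0 < v) : (Bal v m).Nonempty := by
  classical
  let E : Fin v × Fin m ≃ Fin (v*m) := finProdFinEquiv
  refine ⟨fun i => (E.symm i).1, ?_⟩
  simp only [Bal, mem_filter, mem_univ, true_and]
  intro s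
  rw [card_filter_equiv E.symm (fun q : Fin v × Fin m => q.1 = s)]
  have : (Finset.univ.filter (fun q : Fin v × Fin m => q.1 = s)) = {s} ×ˢ Finset.univ := by
    ext ⟨a, b⟩
    simp [eq_comm]
  rw [this, Finset.card_product]
  simp

lemma bal_card_pos (v m : ℕ) (hv : 0 < v) : 0 < (Bal v m).card :=
  Finset.card_pos.mpr (bal_nonempty v m hv)

/-- fibers of `x ↦ x⁻¹(a)` over `m`-subsets all have the same cardinality -/
lemma fiber_const (v m : ℕ) (a : Fin v) (T T' : Finset (Fin (v*m)))
    (hT : T.card = m) (hT' : T'.card = m) :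
    ((Bal v m).filter (fun x => Finset.univ.filter (fun i => x i = a) = T)).card
      = ((Bal v m).filter (fun x => Finset.univ.filter (fun i => x i = a) = T')).card := by
  classical
  obtain ⟨π, hπ⟩ := exists_perm_finset T' T (hT'.trans hT.symm)
  apply Finset.card_bij' (fun x _ => x ∘ π) (fun y _ => y ∘ π.symm)
  · -- maps into
    intro x hx
    simp only [mem_filter, Bal, mem_univ, true_and] at hx ⊢
    obtain ⟨hbal, hfib⟩ := hx
    constructor
    · intro s
      have := card_filter_equiv (π : Fin (v*m) ≃ Fin (v*m)) (fun i => x i = s)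
      simpa [Function.comp] using this.trans (hbal s)
    · ext i
      simp only [mem_filter, mem_univ, true_and, Function.comp_apply]
      rw [← hπ i]
      constructor
      · intro h; rw [← hfib]; simp [h]
      · intro h; rw [← hfib] at h; simpa using h
  · intro y hy
    simp only [mem_filter, Bal, mem_univ, true_and] at hy ⊢
    obtain ⟨hbal, hfib⟩ := hy
    constructor
    · intro s
      have := card_filter_equiv (π.symm : Fin (v*m) ≃ Fin (v*m)) (fun i => y i = s)
      simpa [Function.comp] using this.trans (hbal s)
    · ext i
      simp only [mem_filter, mem_univ, true_and, Function.comp_apply]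
      have : y (π.symm i) = a ↔ π.symm i ∈ T' := by
        rw [← hfib]; simp
      rw [this]
      have h2 := hπ (π.symm i)
      simp only [Equiv.apply_symm_apply] at h2
      exact h2.symm
  · intro x _; ext i; simp
  · intro y _; ext i; simp

lemma count_avoid (v m : ℕ) (a : Fin v) (S : Finset (Fin (v*m))) (hS : S.card = m) :
    ((Bal v m).filter (fun x => ∀ i ∈ S, x i ≠ a)).card * (v*m).choose m
      = (Bal v m).card * ((v*m - m).choose m) := by
  classical
  set fib : (Fin (v*m) → Fin v) → Finset (Fin (v*m)) :=
    fun x => Finset.univ.filter (fun i => x i = a) with hfibdef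
  set g : Finset (Fin (v*m)) → ℕ :=
    fun T => ((Bal v m).filter (fun x => fib x = T)).card with hgdef
  have hgconst : ∀ T ∈ Finset.univ.powersetCard m, g T = g S := by
    intro T hT
    rw [Finset.mem_powersetCard] at hT
    exact fiber_const v m a T S hT.2 hS
  have hfibmem : ∀ x ∈ Bal v m, fib x ∈ Finset.univ.powersetCard m := by
    intro x hx
    rw [Finset.mem_powersetCard]
    refine ⟨Finset.subset_univ _, ?_⟩
    simp only [Bal, mem_filter, mem_univ, true_and] at hx
    exact hx a
  -- total count
  have htot : (Bal v m).card = (v*m).choose m * g S := by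
    rw [Finset.card_eq_sum_card_fiberwise hfibmem]
    rw [Finset.sum_congr rfl hgconst, Finset.sum_const, Finset.card_powersetCard,
      Finset.card_univ, Fintype.card_fin, smul_eq_mul]
  -- filtered count
  have havoid : ∀ x ∈ Bal v m, ((∀ i ∈ S, x i ≠ a) ↔ fib x ∈ Sᶜ.powersetCard m) := by
    intro x hx
    rw [Finset.mem_powersetCard]
    constructor
    · intro h
      refine ⟨?_, (Finset.mem_powersetCard.mp (hfibmem x hx)).2⟩
      intro i hi
      simp only [hfibdef, mem_filter, mem_univ, true_and] at hi
      simp only [Finset.mem_compl]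
      intro hiS
      exact h i hiS hi
    · rintro ⟨hsub, -⟩ i hiS hxa
      have : i ∈ fib x := by simp [hfibdef, hxa]
      exact (Finset.mem_compl.mp (hsub this)) hiS
  have hfilt : ((Bal v m).filter (fun x => ∀ i ∈ S, x i ≠ a)).card
      = (v*m - m).choose m * g S := by
    have hmem2 : ∀ x ∈ (Bal v m).filter (fun x => ∀ i ∈ S, x i ≠ a),
        fib x ∈ Sᶜ.powersetCard m := by
      intro x hx
      rw [mem_filter] at hx
      exact (havoid x hx.1).mp hx.2
    rw [Finset.card_eq_sum_card_fiberwise hmem2]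
    have hterm : ∀ T ∈ Sᶜ.powersetCard m,
        (((Bal v m).filter (fun x => ∀ i ∈ S, x i ≠ a)).filter (fun x => fib x = T)).card
          = g T := by
      intro T hT
      congr 1
      rw [Finset.filter_filter]
      apply Finset.filter_congr
      intro x hx
      constructor
      · rintro ⟨-, h2⟩; exact h2
      · intro h2
        refine ⟨(havoid x hx).mpr ?_, h2⟩
        rw [h2]; exact hT
    rw [Finset.sum_congr rfl hterm]
    have hgc2 : ∀ T ∈ Sᶜ.powersetCard m, g T = g S := by
      intro T hT
      rw [Finset.mem_powersetCard] at hT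
      exact fiber_const v m a T S hT.2 hS
    rw [Finset.sum_congr rfl hgc2, Finset.sum_const, Finset.card_powersetCard, smul_eq_mul]
    congr 2
    rw [Finset.card_compl, hS, Fintype.card_fin]
  rw [hfilt, htot]
  ring

/-- pairs of balanced columns missing the pair `(a,b)` -/
def Miss (v m : ℕ) (a b : Fin v) : Finset ((Fin (v*m) → Fin v) × (Fin (v*m) → Fin v)) :=
  ((Bal v m) ×ˢ (Bal v m)).filter (fun p => ∀ r, ¬(p.1 r = a ∧ p.2 r = b))

lemma count_miss (v m : ℕ) (a b : Fin v) :
    (Miss v m a b).card * (v*m).choose m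
      = (Bal v m).card ^ 2 * ((v*m - m).choose m) := by
  classical
  have hmem : ∀ p ∈ Miss v m a b, p.2 ∈ Bal v m := by
    intro p hp
    simp only [Miss, mem_filter, Finset.mem_product] at hp
    exact hp.1.2
  rw [Finset.card_eq_sum_card_fiberwise hmem, Finset.sum_mul]
  have hterm : ∀ y ∈ Bal v m,
      ((Miss v m a b).filter (fun p => p.2 = y)).card * (v*m).choose m
        = (Bal v m).card * ((v*m - m).choose m) := by
    intro y hy
    have hSy : (Finset.univ.filter (fun i => y i = b)).card = m := by
      simp only [Bal, mem_filter, mem_univ, true_and] at hy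
      exact hy b
    have hbij : ((Miss v m a b).filter (fun p => p.2 = y)).card
        = ((Bal v m).filter (fun x => ∀ i ∈ Finset.univ.filter (fun i => y i = b), x i ≠ a)).card := by
      refine Finset.card_bij' (fun p _ => p.1) (fun x _ => (x, y)) ?_ ?_ ?_ ?_
      · intro p hp
        simp only [Miss, mem_filter, Finset.mem_product] at hp ⊢
        obtain ⟨⟨⟨h1, h2⟩, h3⟩, h4⟩ := hp
        refine ⟨h1, ?_⟩
        intro i hi hxa
        simp only [mem_filter, mem_univ, true_and] at hi
        subst h4
        exact h3 i ⟨hxa, hi⟩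
      · intro x hx
        rw [Finset.mem_filter] at hx
        simp only [Miss]
        refine Finset.mem_filter.mpr ⟨Finset.mem_filter.mpr
          ⟨Finset.mem_product.mpr ⟨hx.1, hy⟩, ?_⟩, rfl⟩
        rintro r ⟨hxa, hyb⟩
        exact hx.2 r (Finset.mem_filter.mpr ⟨Finset.mem_univ r, hyb⟩) hxa
      · intro p hp
        have h4 : p.2 = y := (Finset.mem_filter.mp hp).2
        obtain ⟨p1, p2⟩ := p
        simp only at h4 ⊢
        rw [h4]
      · intro x _; rfl
    rw [hbij, count_avoid v m a _ hSy]
  rw [Finset.sum_congr rfl hterm, Finset.sum_const, smul_eq_mul]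
  ring

/-- ordered pairs of distinct column indices that miss some symbol pair -/
def badPairs {v N K : ℕ} (w : Fin K → Fin N → Fin v) : Finset (Fin K × Fin K) :=
  Finset.univ.filter
    (fun ij => ij.1 ≠ ij.2 ∧ ∃ a b : Fin v, ∀ r, ¬(w ij.1 r = a ∧ w ij.2 r = b))

lemma card_ne_pair (K : ℕ) (i j : Fin K) (hij : i ≠ j) :
    Fintype.card {t : Fin K // t ≠ i ∧ t ≠ j} = K - 2 := by
  rw [Fintype.card_subtype]
  have : Finset.univ.filter (fun t : Fin K => t ≠ i ∧ t ≠ j) = Finset.univ \ {i, j} := by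
    ext t
    simp [not_or]
  rw [this, Finset.card_sdiff_of_subset (Finset.subset_univ _), Finset.card_univ, Fintype.card_fin]
  congr 1
  rw [Finset.card_insert_of_notMem (by simp [hij]), Finset.card_singleton]

lemma count_missW (v m K : ℕ) (i j : Fin K) (hij : i ≠ j) (a b : Fin v) :
    ((Fintype.piFinset (fun _ : Fin K => Bal v m)).filter
        (fun w => ∀ r, ¬(w i r = a ∧ w j r = b))).card
      ≤ (Miss v m a b).card * (Bal v m).card ^ (K - 2) := by
  classical
  have hcard : ((Miss v m a b) ×ˢ
      Fintype.piFinset (fun _ : {t : Fin K // t ≠ i ∧ t ≠ j} => Bal v m)).card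
        = (Miss v m a b).card * (Bal v m).card ^ (K - 2) := by
    rw [Finset.card_product, Fintype.card_piFinset]
    rw [Finset.prod_const, Finset.card_univ, card_ne_pair K i j hij]
  rw [← hcard]
  apply Finset.card_le_card_of_injOn
    (fun w => ((w i, w j), fun t : {t : Fin K // t ≠ i ∧ t ≠ j} => w t.1))
  · intro w hw
    rw [Finset.mem_coe, Finset.mem_filter] at hw
    obtain ⟨hW, hcond⟩ := hw
    rw [Fintype.mem_piFinset] at hW
    refine Finset.mem_product.mpr ⟨?_, ?_⟩
    · simp only [Miss]
      exact Finset.mem_filter.mpr ⟨Finset.mem_product.mpr ⟨hW i, hW j⟩, hcond⟩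
    · rw [Fintype.mem_piFinset]
      intro t
      exact hW t.1
  · intro w1 h1 w2 h2 heq
    simp only [Prod.mk.injEq] at heq
    obtain ⟨⟨hi, hj⟩, hrest⟩ := heq
    funext t
    by_cases hti : t = i
    · rw [hti]; exact hi
    · by_cases htj : t = j
      · rw [htj]; exact hj
      · exact congrFun hrest ⟨t, hti, htj⟩

lemma exists_good_w (v m K : ℕ) (hv : 0 < v) (hK : 2 ≤ K) :
    ∃ w : Fin K → Fin (v*m) → Fin v, (∀ t, w t ∈ Bal v m) ∧
      (badPairs w).card * ((v*m).choose m) ≤ K^2 * v^2 * ((v*m - m).choose m) := by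
  classical
  set W := Fintype.piFinset (fun _ : Fin K => Bal v m) with hWdef
  have hWcard : W.card = (Bal v m).card ^ K := by
    rw [hWdef, Fintype.card_piFinset, Finset.prod_const, Finset.card_univ, Fintype.card_fin]
  have hWne : W.Nonempty := by
    obtain ⟨x, hx⟩ := bal_nonempty v m hv
    exact ⟨fun _ => x, Fintype.mem_piFinset.mpr (fun _ => hx)⟩
  -- bound the total count
  have htot : (∑ w ∈ W, (badPairs w).card) * ((v*m).choose m)
      ≤ K^2 * v^2 * ((v*m - m).choose m) * (Bal v m).card ^ K := by
    have hswap : ∑ w ∈ W, (badPairs w).card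
        = ∑ ij : Fin K × Fin K, (W.filter (fun w =>
            ij.1 ≠ ij.2 ∧ ∃ a b : Fin v, ∀ r, ¬(w ij.1 r = a ∧ w ij.2 r = b))).card := by
      simp only [badPairs, Finset.card_filter]
      rw [Finset.sum_comm]
    rw [hswap, Finset.sum_mul]
    have hbound : ∀ ij : Fin K × Fin K,
        (W.filter (fun w =>
          ij.1 ≠ ij.2 ∧ ∃ a b : Fin v, ∀ r, ¬(w ij.1 r = a ∧ w ij.2 r = b))).card
            * ((v*m).choose m)
          ≤ v^2 * ((v*m - m).choose m) * (Bal v m).card ^ K := by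
      rintro ⟨i, j⟩
      by_cases hij : i = j
      · have : (W.filter (fun w =>
            (i,j).1 ≠ (i,j).2 ∧ ∃ a b : Fin v, ∀ r, ¬(w (i,j).1 r = a ∧ w (i,j).2 r = b))) = ∅ := by
          apply Finset.filter_false_of_mem
          intro w _
          simp [hij]
        rw [this]
        simp
      · -- i ≠ j
        have hsub : (W.filter (fun w =>
            (i,j).1 ≠ (i,j).2 ∧ ∃ a b : Fin v, ∀ r, ¬(w (i,j).1 r = a ∧ w (i,j).2 r = b)))
            ⊆ (Finset.univ : Finset (Fin v × Fin v)).biUnion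
                (fun ab => W.filter (fun w => ∀ r, ¬(w i r = ab.1 ∧ w j r = ab.2))) := by
          intro w hw
          rw [Finset.mem_filter] at hw
          obtain ⟨hW2, -, a, b, hab⟩ := hw
          exact Finset.mem_biUnion.mpr ⟨(a, b), Finset.mem_univ _,
            Finset.mem_filter.mpr ⟨hW2, hab⟩⟩
        calc (W.filter (fun w =>
            (i,j).1 ≠ (i,j).2 ∧ ∃ a b : Fin v, ∀ r, ¬(w (i,j).1 r = a ∧ w (i,j).2 r = b))).card
              * ((v*m).choose m)
            ≤ ((Finset.univ : Finset (Fin v × Fin v)).biUnion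
                (fun ab => W.filter (fun w => ∀ r, ¬(w i r = ab.1 ∧ w j r = ab.2)))).card
                * ((v*m).choose m) :=
              Nat.mul_le_mul_right _ (Finset.card_le_card hsub)
          _ ≤ (∑ ab : Fin v × Fin v,
                (W.filter (fun w => ∀ r, ¬(w i r = ab.1 ∧ w j r = ab.2))).card)
                * ((v*m).choose m) :=
              Nat.mul_le_mul_right _ (Finset.card_biUnion_le)
          _ = ∑ ab : Fin v × Fin v,
                (W.filter (fun w => ∀ r, ¬(w i r = ab.1 ∧ w j r = ab.2))).card
                * ((v*m).choose m) := by rw [Finset.sum_mul]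
          _ ≤ ∑ _ab : Fin v × Fin v, ((v*m - m).choose m) * (Bal v m).card ^ K := by
              apply Finset.sum_le_sum
              rintro ⟨a, b⟩ -
              calc (W.filter (fun w => ∀ r, ¬(w i r = a ∧ w j r = b))).card * ((v*m).choose m)
                  ≤ (Miss v m a b).card * (Bal v m).card ^ (K - 2) * ((v*m).choose m) :=
                    Nat.mul_le_mul_right _ (count_missW v m K i j hij a b)
                _ = ((Miss v m a b).card * ((v*m).choose m)) * (Bal v m).card ^ (K - 2) := by
                    ring
                _ = ((Bal v m).card ^ 2 * ((v*m - m).choose m)) * (Bal v m).card ^ (K - 2) := by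
                    rw [count_miss]
                _ = ((v*m - m).choose m) * (Bal v m).card ^ K := by
                    have hK2 : (Bal v m).card ^ 2 * (Bal v m).card ^ (K-2)
                        = (Bal v m).card ^ K := by
                      rw [← pow_add, Nat.add_sub_cancel' hK]
                    rw [← hK2]
                    ring
          _ = v^2 * ((v*m - m).choose m) * (Bal v m).card ^ K := by
              rw [Finset.sum_const, Finset.card_univ, smul_eq_mul]
              rw [Fintype.card_prod, Fintype.card_fin]
              ring
    calc ∑ ij : Fin K × Fin K, (W.filter (fun w =>
            ij.1 ≠ ij.2 ∧ ∃ a b : Fin v, ∀ r, ¬(w ij.1 r = a ∧ w ij.2 r = b))).card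
            * ((v*m).choose m)
        ≤ ∑ _ij : Fin K × Fin K, v^2 * ((v*m - m).choose m) * (Bal v m).card ^ K :=
          Finset.sum_le_sum (fun ij _ => hbound ij)
      _ = K^2 * v^2 * ((v*m - m).choose m) * (Bal v m).card ^ K := by
          rw [Finset.sum_const, Finset.card_univ, smul_eq_mul, Fintype.card_prod,
            Fintype.card_fin]
          ring
  -- pigeonhole
  obtain ⟨w, hwW, hwmin⟩ := Finset.exists_min_image W (fun w => (badPairs w).card) hWne
  refine ⟨w, fun t => Fintype.mem_piFinset.mp hwW t, ?_⟩
  have hlow : W.card * (badPairs w).card ≤ ∑ w' ∈ W, (badPairs w').card := by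
    have := Finset.card_nsmul_le_sum W (fun w => (badPairs w).card) _ hwmin
    simpa [smul_eq_mul] using this
  have hchain : (badPairs w).card * ((v*m).choose m) * (Bal v m).card ^ K
      ≤ K^2 * v^2 * ((v*m - m).choose m) * (Bal v m).card ^ K := by
    calc (badPairs w).card * ((v*m).choose m) * (Bal v m).card ^ K
        = (W.card * (badPairs w).card) * ((v*m).choose m) := by rw [hWcard]; ring
      _ ≤ (∑ w' ∈ W, (badPairs w').card) * ((v*m).choose m) :=
          Nat.mul_le_mul_right _ hlow
      _ ≤ K^2 * v^2 * ((v*m - m).choose m) * (Bal v m).card ^ K := htot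
  exact Nat.le_of_mul_le_mul_right hchain (Nat.pow_pos (bal_card_pos v m hv))

/-- `A` is a covering array of strength `t`: every `t` distinct columns cover all
`t`-tuples over the alphabet among their rows. -/
def IsCoveringArray {N k v : ℕ} (t : ℕ) (A : Fin N → Fin k → Fin v) : Prop :=
  ∀ cols : Fin t → Fin k, Function.Injective cols →
    ∀ tup : Fin t → Fin v, ∃ r : Fin N, ∀ i, A r (cols i) = tup i

/-- `CAN t k v` is the minimum number of rows of a covering array of strength `t`
with `k` columns over a `v`-letter alphabet. -/
noncomputable def CAN (t k v : ℕ) : ℕ :=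
  sInf {N | ∃ A : Fin N → Fin k → Fin v, IsCoveringArray t A}

lemma can_le_of_choose (v k m : ℕ) (hv : 3 ≤ v) (hk : 0 < k)
    (H : (2*k)^2 * v^2 * ((v*m - m).choose m) ≤ k * ((v*m).choose m)) :
    CAN 2 k v ≤ v*m := by
  classical
  obtain ⟨w, hwB, hwbad⟩ := exists_good_w v m (2*k) (by omega) (by omega)
  -- badPairs w has at most k elements
  have hCpos : 0 < (v*m).choose m := Nat.choose_pos (by nlinarith)
  have hbadk : (badPairs w).card ≤ k := by
    have h1 : (badPairs w).card * ((v*m).choose m) ≤ k * ((v*m).choose m) :=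
      le_trans hwbad H
    exact Nat.le_of_mul_le_mul_right h1 hCpos
  -- delete first coordinates of bad pairs
  set I : Finset (Fin (2*k)) := (badPairs w).image Prod.fst with hIdef
  have hIcard : I.card ≤ k := le_trans (Finset.card_image_le) hbadk
  set good : Finset (Fin (2*k)) := Finset.univ \ I with hgdef
  have hgood : k ≤ good.card := by
    have : good.card = 2*k - I.card := by
      rw [hgdef, Finset.card_sdiff_of_subset (Finset.subset_univ _), Finset.card_univ, Fintype.card_fin]
    omega
  obtain ⟨s, hs_sub, hs_card⟩ := Finset.exists_subset_card_eq hgood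
  set σ := s.orderEmbOfFin hs_card with hσdef
  have hσmem : ∀ c : Fin k, (σ c) ∈ good := fun c => hs_sub (s.orderEmbOfFin_mem hs_card c)
  refine Nat.sInf_le ⟨fun r c => w (σ c) r, ?_⟩
  intro cols hinj tup
  set i := σ (cols 0) with hidef
  set j := σ (cols 1) with hjdef
  have hij : i ≠ j := by
    intro h
    have h01 : (0 : Fin 2) ≠ 1 := by decide
    exact h01 (hinj (σ.injective h))
  have hnotbad : (i, j) ∉ badPairs w := by
    intro hmem
    have : i ∈ I := Finset.mem_image.mpr ⟨(i, j), hmem, rfl⟩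
    have hg := hσmem (cols 0)
    rw [← hidef] at hg
    rw [hgdef, Finset.mem_sdiff] at hg
    exact hg.2 this
  have hcov : ∃ r, w i r = tup 0 ∧ w j r = tup 1 := by
    by_contra hcon
    push_neg at hcon
    apply hnotbad
    refine Finset.mem_filter.mpr ⟨Finset.mem_univ _, hij, tup 0, tup 1, ?_⟩
    rintro r ⟨h1, h2⟩
    exact hcon r h1 h2
  obtain ⟨r, hr1, hr2⟩ := hcov
  refine ⟨r, ?_⟩
  intro t
  fin_cases t
  · exact hr1
  · exact hr2

lemma sub_mul_eq (v m : ℕ) (hv : 3 ≤ v) : v*m - m = (v-1)*m := by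
  calc v*m - m = v*m - 1*m := by rw [one_mul]
    _ = (v-1)*m := (Nat.sub_mul _ _ _).symm

lemma can_le_final (v k m : ℕ) (hv : 3 ≤ v) (hk : 0 < k)
    (H2 : 4 * k * (v^2 * (v*m+1)) * (((v-1) ^ (2*(v-1))) ^ m)
      ≤ (v ^ v * (v-2) ^ (v-2)) ^ m) :
    CAN 2 k v ≤ v * m := by
  apply can_le_of_choose v k m hv hk
  rw [sub_mul_eq v m hv]
  have hkey := key_binom v m hv
  have hRpos : 0 < (v ^ v * (v-2) ^ (v-2)) ^ m := by
    have h1 : 0 < v ^ v := Nat.pow_pos (by omega)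
    have h2 : 0 < (v-2) ^ (v-2) := Nat.pow_pos (by omega)
    exact Nat.pow_pos (Nat.mul_pos h1 h2)
  have hmain : 4*k*v^2*(((v-1)*m).choose m) ≤ (v*m).choose m := by
    have hchain : (4*k*v^2*(((v-1)*m).choose m)) * ((v ^ v * (v-2) ^ (v-2)) ^ m)
        ≤ ((v*m).choose m) * ((v ^ v * (v-2) ^ (v-2)) ^ m) := by
      calc (4*k*v^2*(((v-1)*m).choose m)) * ((v ^ v * (v-2) ^ (v-2)) ^ m)
          = (4*k*v^2) * ((((v-1)*m).choose m) * ((v ^ v * (v-2) ^ (v-2)) ^ m)) := by ring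
        _ ≤ (4*k*v^2) * ((v*m+1) * ((v*m).choose m) * (((v-1) ^ (2*(v-1))) ^ m)) :=
            Nat.mul_le_mul_left _ hkey
        _ = ((v*m).choose m) * (4 * k * (v^2 * (v*m+1)) * (((v-1) ^ (2*(v-1))) ^ m)) := by
            ring
        _ ≤ ((v*m).choose m) * ((v ^ v * (v-2) ^ (v-2)) ^ m) :=
            Nat.mul_le_mul_left _ H2
    exact Nat.le_of_mul_le_mul_right hchain hRpos
  calc (2*k)^2 * v^2 * (((v-1)*m).choose m)
      = k * (4*k*v^2*(((v-1)*m).choose m)) := by ring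
    _ ≤ k * ((v*m).choose m) := Nat.mul_le_mul_left _ hmain

lemma ratio_gt_one (v : ℕ) (hv : 3 ≤ v) :
    (1:ℝ) < (v:ℝ) ^ v * ((v:ℝ) - 2) ^ (v - 2) / ((v:ℝ) - 1) ^ (2 * (v - 1)) := by
  have hx3 : (3:ℝ) ≤ (v:ℝ) := by exact_mod_cast hv
  set x : ℝ := (v : ℝ) with hxdef
  have hx0 : 0 < x := by linarith
  have hx1 : 0 < x - 1 := by linarith
  have hx2 : 0 < x - 2 := by linarith
  have hA : 1 < x * (Real.log x - Real.log (x - 1)) := by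
    have hne : (x-1)/x ≠ 1 := by
      intro h
      rw [div_eq_one_iff_eq (by linarith : x ≠ 0)] at h
      linarith
    have h1 : Real.log ((x-1)/x) < (x-1)/x - 1 :=
      Real.log_lt_sub_one_of_pos (by positivity) hne
    rw [Real.log_div (by linarith) (by linarith)] at h1
    have h2 : (x-1)/x - 1 = -(1/x) := by field_simp; ring
    rw [h2] at h1
    have h3 : 1/x < Real.log x - Real.log (x-1) := by linarith
    calc 1 = x * (1/x) := by field_simp
      _ < x * (Real.log x - Real.log (x-1)) := mul_lt_mul_of_pos_left h3 hx0
  have hB : (x - 2) * (Real.log (x - 1) - Real.log (x - 2)) < 1 := by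
    have hne : (x-1)/(x-2) ≠ 1 := by
      intro h
      rw [div_eq_one_iff_eq (by linarith : x - 2 ≠ 0)] at h
      linarith
    have h1 : Real.log ((x-1)/(x-2)) < (x-1)/(x-2) - 1 :=
      Real.log_lt_sub_one_of_pos (by positivity) hne
    rw [Real.log_div (by linarith) (by linarith)] at h1
    have h2 : (x-1)/(x-2) - 1 = 1/(x-2) := by field_simp; norm_num
    rw [h2] at h1
    calc (x - 2) * (Real.log (x - 1) - Real.log (x - 2)) < (x-2) * (1/(x-2)) :=
          mul_lt_mul_of_pos_left h1 hx2
      _ = 1 := by field_simp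
  have hcast2 : ((v - 2 : ℕ) : ℝ) = x - 2 := by
    rw [hxdef]; push_cast [Nat.cast_sub (by omega : 2 ≤ v)]; ring
  have hc1 : ((2 * (v - 1) : ℕ) : ℝ) = 2 * (x - 1) := by
    rw [hxdef]; push_cast [Nat.cast_sub (by omega : 1 ≤ v)]; ring
  have hexp : x * Real.log x + (x - 2) * Real.log (x - 2)
      - 2 * (x - 1) * Real.log (x - 1)
      = x * (Real.log x - Real.log (x-1)) - (x - 2) * (Real.log (x-1) - Real.log (x-2)) := by
    ring
  have hlog : 0 < Real.log (x ^ v * (x - 2) ^ (v - 2) / (x - 1) ^ (2 * (v - 1))) := by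
    rw [Real.log_div (by positivity) (by positivity),
      Real.log_mul (by positivity) (by positivity),
      Real.log_pow, Real.log_pow, Real.log_pow]
    rw [hcast2, hc1, ← hxdef]
    rw [show (x * Real.log x + (x - 2) * Real.log (x - 2)) - 2 * (x - 1) * Real.log (x - 1)
      = x * Real.log x + (x - 2) * Real.log (x - 2) - 2 * (x - 1) * Real.log (x - 1) by ring,
      hexp]
    linarith
  have hpos : 0 < x ^ v * (x - 2) ^ (v - 2) / (x - 1) ^ (2 * (v - 1)) := by positivity
  exact (Real.log_pos_iff hpos.le).mp hlog

theorem d_two_v_upper_bound (v : ℕ) (hv : 3 ≤ v) :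
    Filter.limsup (fun k : ℕ => (CAN 2 k v : ℝ) / Real.logb 2 k) Filter.atTop ≤
      (v : ℝ) / Real.logb 2
        ((v : ℝ) ^ v * ((v : ℝ) - 2) ^ (v - 2) / ((v : ℝ) - 1) ^ (2 * (v - 1))) := by
  classical
  have hx3 : (3:ℝ) ≤ (v:ℝ) := by exact_mod_cast hv
  have hx0 : (0:ℝ) < (v:ℝ) := by linarith
  set ρ : ℝ := (v:ℝ) ^ v * ((v:ℝ) - 2) ^ (v - 2) / ((v:ℝ) - 1) ^ (2 * (v - 1)) with hρdef
  have hρ1 : (1:ℝ) < ρ := ratio_gt_one v hv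
  have hρ0 : (0:ℝ) < ρ := by linarith
  set D : ℝ := Real.logb 2 ρ with hDdef
  have hD : 0 < D := Real.logb_pos (by norm_num) hρ1
  have hcast1 : ((v - 1 : ℕ) : ℝ) = (v:ℝ) - 1 := by
    push_cast [Nat.cast_sub (by omega : 1 ≤ v)]; ring
  have hcast2 : ((v - 2 : ℕ) : ℝ) = (v:ℝ) - 2 := by
    push_cast [Nat.cast_sub (by omega : 2 ≤ v)]; ring
  have hrr0 : (0:ℝ) < ((v:ℝ) - 1) ^ (2*(v-1)) := pow_pos (by linarith) _
  -- main eventual bound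
  have hev : ∀ b : ℝ, (v:ℝ) / D < b →
      ∀ᶠ (k : ℕ) in atTop, (CAN 2 k v : ℝ) / Real.logb 2 (k : ℝ) ≤ b := by
    intro b hb
    have hbpos : 0 < b := lt_trans (div_pos hx0 hD) hb
    have hε : 0 < b * D / (v:ℝ) - 1 := by
      have hxbD : (v:ℝ) < b * D := (div_lt_iff₀ hD).mp hb
      rw [sub_pos, lt_div_iff₀ hx0, one_mul]
      linarith
    set ε : ℝ := b * D / (v:ℝ) - 1 with hεdef
    have E1 : ∀ᶠ (k : ℕ) in atTop, 2 ≤ k := eventually_ge_atTop 2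
    have E2 : ∀ᶠ (k : ℕ) in atTop, 1 ≤ (b/(v:ℝ)) * Real.logb 2 (k:ℝ) := by
      have htend : Tendsto (fun k : ℕ => (b/(v:ℝ)) * Real.logb 2 (k:ℝ)) atTop atTop := by
        apply Tendsto.const_mul_atTop (div_pos hbpos hx0)
        have h2 : Tendsto (fun t : ℝ => Real.logb 2 t) atTop atTop :=
          Real.tendsto_logb_atTop (by norm_num)
        exact h2.comp tendsto_natCast_atTop_atTop
      exact htend.eventually_ge_atTop 1
    have E3 : ∀ᶠ (k : ℕ) in atTop,
        ρ * (4 * (v:ℝ)^2 * (b * Real.logb 2 (k:ℝ) + 1)) ≤ (k:ℝ) ^ ε := by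
      set c1 : ℝ := ρ * 4 * (v:ℝ)^2 * b / Real.log 2 with hc1def
      set c2 : ℝ := ρ * 4 * (v:ℝ)^2 with hc2def
      have hlo : (fun t : ℝ => c1 * Real.log t + c2) =o[atTop] (fun t : ℝ => t ^ ε) := by
        have h1 : (fun t : ℝ => c1 * Real.log t) =o[atTop] (fun t : ℝ => t ^ ε) :=
          (isLittleO_log_rpow_atTop hε).const_mul_left c1
        have h2 : (fun _ : ℝ => c2) =o[atTop] (fun t : ℝ => t ^ ε) := by
          apply Asymptotics.isLittleO_const_left.mpr
          right
          have hrt := tendsto_rpow_atTop hε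
          have hnorm : Tendsto (fun t : ℝ => ‖t ^ ε‖) atTop atTop :=
            tendsto_abs_atTop_atTop.comp hrt
          exact hnorm
        exact h1.add h2
      have hbd := hlo.bound one_pos
      have hreal : ∀ᶠ t : ℝ in atTop,
          ρ * (4 * (v:ℝ)^2 * (b * Real.logb 2 t + 1)) ≤ t ^ ε := by
        filter_upwards [hbd, eventually_ge_atTop (1:ℝ)] with t hbt ht1
        have hlog2 : Real.log 2 ≠ 0 := by
          have := Real.log_pos (by norm_num : (1:ℝ) < 2)
          linarith
        have heq : ρ * (4 * (v:ℝ)^2 * (b * Real.logb 2 t + 1)) = c1 * Real.log t + c2 := by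
          rw [Real.logb, hc1def, hc2def]
          field_simp
        rw [heq]
        calc c1 * Real.log t + c2 ≤ ‖c1 * Real.log t + c2‖ := by
              rw [Real.norm_eq_abs]; exact le_abs_self _
          _ ≤ 1 * ‖t ^ ε‖ := hbt
          _ = |t ^ ε| := by rw [one_mul, Real.norm_eq_abs]
          _ = t ^ ε := abs_of_nonneg (Real.rpow_nonneg (by linarith) ε)
      exact tendsto_natCast_atTop_atTop.eventually hreal
    filter_upwards [E1, E2, E3] with k hk2 hk1m hkE3
    have hk2R : (2:ℝ) ≤ (k:ℝ) := by exact_mod_cast hk2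
    have hkpos : (0:ℝ) < (k:ℝ) := by linarith
    set L : ℝ := Real.logb 2 (k:ℝ) with hLdef
    have hL0 : 0 < L := Real.logb_pos (by norm_num) (by linarith)
    set m : ℕ := ⌊(b/(v:ℝ)) * L⌋₊ with hmdef
    have hm1 : 1 ≤ m := Nat.le_floor (by exact_mod_cast hk1m)
    have hmler : (m:ℝ) ≤ (b/(v:ℝ)) * L := Nat.floor_le (by linarith)
    have hmgt : (b/(v:ℝ)) * L < m + 1 := Nat.lt_floor_add_one _
    have hvm : (v:ℝ) * m ≤ b * L := by
      have hstep := mul_le_mul_of_nonneg_left hmler (le_of_lt hx0)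
      have hxne : (v:ℝ) ≠ 0 := ne_of_gt hx0
      calc (v:ℝ) * m ≤ (v:ℝ) * ((b/(v:ℝ))*L) := hstep
        _ = b * L := by field_simp
    have hρ2D : (2:ℝ) ^ D = ρ := Real.rpow_logb (by norm_num) (by norm_num) hρ0
    have h2L : (2:ℝ) ^ L = (k:ℝ) := Real.rpow_logb (by norm_num) (by norm_num) hkpos
    have hρm : (k:ℝ) * ((k:ℝ) ^ ε / ρ) ≤ ρ ^ m := by
      have h1 : ρ ^ m = ρ ^ (m:ℝ) := (Real.rpow_natCast ρ m).symm
      have h2 : ρ ^ ((b/(v:ℝ))*L - 1) ≤ ρ ^ (m:ℝ) :=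
        Real.rpow_le_rpow_of_exponent_le (le_of_lt hρ1) (by linarith)
      have h3 : ρ ^ ((b/(v:ℝ))*L - 1) = ρ ^ ((b/(v:ℝ))*L) / ρ := by
        rw [Real.rpow_sub hρ0, Real.rpow_one]
      have h4 : ρ ^ ((b/(v:ℝ))*L) = (k:ℝ) ^ ((1:ℝ) + ε) := by
        rw [← hρ2D, ← Real.rpow_mul (by norm_num : (0:ℝ) ≤ 2)]
        have hxne : (v:ℝ) ≠ 0 := ne_of_gt hx0
        have he : D * ((b/(v:ℝ))*L) = L * (1 + ε) := by
          rw [hεdef]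
          field_simp
          ring
        rw [he, Real.rpow_mul (by norm_num : (0:ℝ) ≤ 2), h2L]
      have h5 : (k:ℝ) ^ ((1:ℝ) + ε) = (k:ℝ) * (k:ℝ) ^ ε := by
        rw [Real.rpow_add hkpos, Real.rpow_one]
      calc (k:ℝ) * ((k:ℝ) ^ ε / ρ) = (k:ℝ) ^ ((1:ℝ)+ε) / ρ := by
            rw [h5]; ring
        _ = ρ ^ ((b/(v:ℝ))*L - 1) := by rw [h3, h4]
        _ ≤ ρ ^ (m:ℝ) := h2
        _ = ρ ^ m := h1.symm
    have hmain : 4 * (k:ℝ) * ((v:ℝ)^2 * ((v:ℝ)*(m:ℝ)+1)) ≤ ρ ^ m := by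
      have hvm1 : (v:ℝ)*(m:ℝ) + 1 ≤ b*L + 1 := by linarith
      have hE3' : 4 * (v:ℝ)^2 * (b*L+1) ≤ (k:ℝ)^ε / ρ := by
        rw [le_div_iff₀ hρ0]
        calc 4 * (v:ℝ)^2 * (b*L+1) * ρ = ρ * (4 * (v:ℝ)^2 * (b * L + 1)) := by ring
          _ ≤ (k:ℝ)^ε := hkE3
      calc 4 * (k:ℝ) * ((v:ℝ)^2 * ((v:ℝ)*(m:ℝ)+1))
          = (k:ℝ) * (4 * (v:ℝ)^2 * ((v:ℝ)*(m:ℝ)+1)) := by ring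
        _ ≤ (k:ℝ) * (4 * (v:ℝ)^2 * (b*L+1)) := by
            apply mul_le_mul_of_nonneg_left _ (le_of_lt hkpos)
            nlinarith [sq_nonneg ((v:ℝ))]
        _ ≤ (k:ℝ) * ((k:ℝ)^ε / ρ) :=
            mul_le_mul_of_nonneg_left hE3' (le_of_lt hkpos)
        _ ≤ ρ ^ m := hρm
    have hH2 : 4 * k * (v^2 * (v*m+1)) * (((v-1) ^ (2*(v-1))) ^ m)
        ≤ (v ^ v * (v-2) ^ (v-2)) ^ m := by
      have hLcast : ((4 * k * (v^2 * (v*m+1)) * (((v-1) ^ (2*(v-1))) ^ m) : ℕ) : ℝ)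
          = 4 * (k:ℝ) * ((v:ℝ)^2 * ((v:ℝ)*(m:ℝ)+1)) * ((((v:ℝ)-1) ^ (2*(v-1))) ^ m) := by
        push_cast [hcast1]
        ring
      have hRcast' : (((v ^ v * (v-2) ^ (v-2)) ^ m : ℕ) : ℝ)
          = (((v:ℝ)) ^ v * (((v:ℝ))-2) ^ (v-2)) ^ m := by
        push_cast [hcast2]
        ring
      rw [← Nat.cast_le (α := ℝ), hLcast, hRcast']
      have hRρ : ((v:ℝ)) ^ v * (((v:ℝ))-2) ^ (v-2) = ρ * (((v:ℝ)-1) ^ (2*(v-1))) := by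
        rw [hρdef]
        field_simp
      rw [hRρ, mul_pow]
      exact mul_le_mul_of_nonneg_right hmain (le_of_lt (pow_pos hrr0 m))
    have hCAN := can_le_final v k m hv (by omega) hH2
    have hCANr : (CAN 2 k v : ℝ) ≤ b * L := by
      calc (CAN 2 k v : ℝ) ≤ ((v*m : ℕ) : ℝ) := by exact_mod_cast hCAN
        _ = (v:ℝ) * m := by push_cast; ring
        _ ≤ b * L := hvm
    rw [div_le_iff₀ hL0]
    linarith
  -- conclude via the characterization of limsup
  have hnn : ∀ᶠ (k:ℕ) in atTop, 0 ≤ (CAN 2 k v : ℝ) / Real.logb 2 (k:ℝ) := by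
    filter_upwards [eventually_ge_atTop 1] with k hk1
    have h1 : (1:ℝ) ≤ (k:ℝ) := by exact_mod_cast hk1
    have h2 : (0:ℝ) ≤ Real.logb 2 (k:ℝ) := Real.logb_nonneg (by norm_num) h1
    positivity
  rw [Filter.limsup_eq]
  have hbdd : BddBelow {a : ℝ | ∀ᶠ (n:ℕ) in atTop,
      (fun k : ℕ => (CAN 2 k v : ℝ) / Real.logb 2 (k:ℝ)) n ≤ a} := by
    refine ⟨0, fun a ha => ?_⟩
    obtain ⟨k, hk1, hk2⟩ := (ha.and hnn).exists
    linarith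
  calc sInf {a : ℝ | ∀ᶠ (n:ℕ) in atTop,
        (fun k : ℕ => (CAN 2 k v : ℝ) / Real.logb 2 (k:ℝ)) n ≤ a}
      ≤ sInf (Set.Ioi ((v:ℝ)/D)) := by
        apply csInf_le_csInf hbdd ⟨(v:ℝ)/D + 1, Set.mem_Ioi.mpr (lt_add_one _)⟩
        intro bb hbb
        exact hev bb hbb
    _ = (v:ℝ) / D := csInf_Ioi
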